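/- Let m ≤ N, let A be an m×m real symmetric positive semidefinite matrix, and let P be an N×m real matrix. Then for every j ∈ {1, …, m}, λ_j(P A Pᵀ) ≥ λ_min(Pᵀ P) · λ_j(A), and for every j with m < j ≤ N, λ_j(P A Pᵀ) = 0. -/

import Mathlib

open Matrix
open scoped Classical

/-- The `j`-th largest eigenvalue (with `j` zero-based, so `j = 0` gives the largest and
`j = n - 1` the smallest eigenvalue) of a real square matrix, where the eigenvalues are counted
with multiplicity and ordered decreasingly; junk value `0` if the matrix is not symmetric
(Hermitian). -/
noncomputable def eigDesc {n : ℕ} (A : Matrix (Fin n) (Fin n) ℝ) (j : Fin n) : ℝ :=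
  if hA : A.IsHermitian then hA.eigenvalues (Tuple.sort hA.eigenvalues j.rev) else 0

section sorted
variable {n : ℕ} {M : Matrix (Fin n) (Fin n) ℝ} (hM : M.IsHermitian)

noncomputable def sval : Fin n → ℝ := hM.eigenvalues ∘ Tuple.sort hM.eigenvalues

noncomputable def svec (i : Fin n) : Fin n → ℝ :=
  ⇑(hM.eigenvectorBasis (Tuple.sort hM.eigenvalues i))

lemma sval_mono : Monotone (sval hM) := Tuple.monotone_sort _

lemma mulVec_svec (i : Fin n) : M *ᵥ svec hM i = sval hM i • svec hM i :=
  hM.mulVec_eigenvectorBasis _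

lemma svec_dot (i j : Fin n) : svec hM i ⬝ᵥ svec hM j = if i = j then 1 else 0 := by
  have := hM.eigenvectorBasis.orthonormal
  rw [orthonormal_iff_ite] at this
  have h2 := this (Tuple.sort hM.eigenvalues i) (Tuple.sort hM.eigenvalues j)
  rw [EuclideanSpace.inner_eq_star_dotProduct] at h2
  simp only [Equiv.apply_eq_iff_eq] at h2
  rw [dotProduct_comm]; simpa [svec] using h2

lemma eigDesc_eq (j : Fin n) : eigDesc M j = sval hM (j.rev) := by
  rw [eigDesc, dif_pos hM]; rfl

lemma eigDesc_nonneg {A : Matrix (Fin n) (Fin n) ℝ} (hA : A.PosSemidef) (j : Fin n) :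
    0 ≤ eigDesc A j := by
  rw [eigDesc_eq hA.1]
  exact hA.eigenvalues_nonneg _

end sorted

set_option linter.unusedSectionVars false
section ortho
variable {n : ℕ} {ι : Type*} [Fintype ι] [DecidableEq ι] {w : ι → Fin n → ℝ}

lemma sum_dot (f : ι → Fin n → ℝ) (y : Fin n → ℝ) :
    (∑ i, f i) ⬝ᵥ y = ∑ i, f i ⬝ᵥ y := by
  simp only [dotProduct, Finset.sum_apply, Finset.sum_mul]
  rw [Finset.sum_comm]

lemma dot_sum_sum (hw : ∀ i j, w i ⬝ᵥ w j = if i = j then 1 else 0) (a b : ι → ℝ) :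
    (∑ i, a i • w i) ⬝ᵥ (∑ i, b i • w i) = ∑ i, a i * b i := by
  rw [sum_dot]
  have : ∀ i, (a i • w i) ⬝ᵥ (∑ j, b j • w j) = a i * b i := by
    intro i
    rw [dotProduct_comm, sum_dot]
    simp only [smul_dotProduct, dotProduct_smul, smul_eq_mul]
    simp only [dotProduct_comm (w _) (w i), hw, mul_ite, mul_one, mul_zero]
    rw [Finset.sum_ite_eq Finset.univ i (fun j => a i * b j)]
    simp
  simp [this]

lemma li_of_dot_orthonormal (hw : ∀ i j, w i ⬝ᵥ w j = if i = j then 1 else 0) :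
    LinearIndependent ℝ w := by
  rw [Fintype.linearIndependent_iff]
  intro g hg i
  have h := congrArg (fun x => x ⬝ᵥ w i) hg
  simpa [sum_dot, smul_dotProduct, hw] using h

lemma dot_self_pos {x : Fin n → ℝ} (hx : x ≠ 0) : 0 < x ⬝ᵥ x := by
  obtain ⟨k, hk⟩ := Function.ne_iff.mp hx
  refine Finset.sum_pos' (fun i _ => mul_self_nonneg _) ⟨k, Finset.mem_univ k, ?_⟩
  exact mul_self_pos.mpr hk

end ortho

lemma key_lower {n : ℕ} {M : Matrix (Fin n) (Fin n) ℝ} (hM : M.IsHermitian) (j : Fin n) {c : ℝ}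
    {κ : ℕ} (hκ : (j : ℕ) + 1 ≤ κ) (v : Fin κ → (Fin n → ℝ)) (hv : LinearIndependent ℝ v)
    (hq : ∀ x ∈ Submodule.span ℝ (Set.range v), c * (x ⬝ᵥ x) ≤ x ⬝ᵥ (M *ᵥ x)) :
    c ≤ eigDesc M j := by
  have hjrev : (j.rev : ℕ) = n - 1 - (j : ℕ) := Fin.val_rev j ▸ by omega
  have hjn : (j : ℕ) < n := j.isLt
  set incl : Fin ((j.rev : ℕ) + 1) → Fin n := fun i => ⟨(i : ℕ), by
    have := i.isLt; have := j.rev.isLt; omega⟩ with hincl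
  have hinclinj : Function.Injective incl := by
    intro a b hab
    simpa [hincl, Fin.ext_iff] using congrArg (Fin.val) hab
  set w' : Fin ((j.rev : ℕ) + 1) → (Fin n → ℝ) := fun i => svec hM (incl i) with hw'def
  have hw' : ∀ a b, w' a ⬝ᵥ w' b = if a = b then 1 else 0 := by
    intro a b
    rw [hw'def]
    simp only []
    rw [svec_dot]
    exact if_congr ⟨fun h => hinclinj h, fun h => h ▸ rfl⟩ rfl rfl
  set V := Submodule.span ℝ (Set.range v)
  set W := Submodule.span ℝ (Set.range w')
  have hV : Module.finrank ℝ V = κ := by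
    simpa using finrank_span_eq_card hv
  have hW : Module.finrank ℝ W = (j.rev : ℕ) + 1 := by
    simpa using finrank_span_eq_card (li_of_dot_orthonormal hw')
  have hinf : 0 < Module.finrank ℝ ↥(V ⊓ W) := by
    have h1 := Submodule.finrank_sup_add_finrank_inf_eq V W
    have h2 : Module.finrank ℝ ↥(V ⊔ W) ≤ n := by
      have := Submodule.finrank_le (V ⊔ W)
      simpa [Module.finrank_fin_fun] using this
    omega
  obtain ⟨⟨x, hxVW⟩, hxne⟩ := Module.finrank_pos_iff_exists_ne_zero.mp hinf
  have hxne' : x ≠ 0 := by simpa [Submodule.mk_eq_zero] using hxne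
  obtain ⟨hxV, hxW⟩ := hxVW
  obtain ⟨b, hb⟩ := (Submodule.mem_span_range_iff_exists_fun ℝ).mp hxW
  have hMx : M *ᵥ x = ∑ i, (sval hM (incl i) * b i) • w' i := by
    rw [← hb]
    rw [← Matrix.mulVecLin_apply, map_sum]
    congr 1; funext i
    rw [LinearMap.map_smul, Matrix.mulVecLin_apply]
    show b i • (M *ᵥ svec hM (incl i)) = _
    rw [mulVec_svec, smul_smul, mul_comm]
  have hquad : x ⬝ᵥ (M *ᵥ x) = ∑ i, b i * (sval hM (incl i) * b i) := by
    rw [hMx, ← hb, dot_sum_sum hw']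
  have hself : x ⬝ᵥ x = ∑ i, b i * b i := by
    rw [← hb, dot_sum_sum hw']
  have hub : x ⬝ᵥ (M *ᵥ x) ≤ sval hM j.rev * (x ⬝ᵥ x) := by
    rw [hquad, hself, Finset.mul_sum]
    refine Finset.sum_le_sum fun i _ => ?_
    have hle : sval hM (incl i) ≤ sval hM j.rev := by
      apply sval_mono
      simp only [hincl, Fin.le_def]
      exact Nat.lt_succ_iff.mp i.isLt
    nlinarith [mul_self_nonneg (b i)]
  have hpos : 0 < x ⬝ᵥ x := dot_self_pos hxne'
  have := le_trans (hq x hxV) hub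
  rw [eigDesc_eq hM]
  exact le_of_mul_le_mul_right (by linarith) hpos

section helpers
variable {n : ℕ} {M : Matrix (Fin n) (Fin n) ℝ} (hM : M.IsHermitian)
variable {ι : Type*} [Fintype ι] [DecidableEq ι]

lemma svec_comp_dot {f : ι → Fin n} (hf : Function.Injective f) (a b : ι) :
    svec hM (f a) ⬝ᵥ svec hM (f b) = if a = b then 1 else 0 := by
  rw [svec_dot]
  exact if_congr ⟨fun h => hf h, fun h => h ▸ rfl⟩ rfl rfl

lemma mulVec_sum_svec (f : ι → Fin n) (b : ι → ℝ) :
    M *ᵥ (∑ i, b i • svec hM (f i)) = ∑ i, (sval hM (f i) * b i) • svec hM (f i) := by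
  rw [← Matrix.mulVecLin_apply, map_sum]
  congr 1; funext i
  rw [LinearMap.map_smul, Matrix.mulVecLin_apply]
  rw [mulVec_svec, smul_smul, mul_comm]

lemma self_dot_sum_svec {f : ι → Fin n} (hf : Function.Injective f) (b : ι → ℝ) :
    (∑ i, b i • svec hM (f i)) ⬝ᵥ (∑ i, b i • svec hM (f i)) = ∑ i, b i * b i :=
  dot_sum_sum (svec_comp_dot hM hf) b b

lemma quad_sum_svec {f : ι → Fin n} (hf : Function.Injective f) (b : ι → ℝ) :
    (∑ i, b i • svec hM (f i)) ⬝ᵥ (M *ᵥ (∑ i, b i • svec hM (f i))) =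
      ∑ i, b i * (sval hM (f i) * b i) := by
  rw [mulVec_sum_svec, dot_sum_sum (svec_comp_dot hM hf)]

end helpers

lemma dot_mulVec_symm {a b : Type*} [Fintype a] [Fintype b]
    (M : Matrix a b ℝ) (x : a → ℝ) (z : b → ℝ) :
    x ⬝ᵥ (M *ᵥ z) = (Mᵀ *ᵥ x) ⬝ᵥ z := by
  rw [dotProduct_mulVec, Matrix.mulVec_transpose]

lemma dot_XtX {a b : Type*} [Fintype a] [Fintype b]
    (X : Matrix a b ℝ) (s : b → ℝ) :
    (X *ᵥ s) ⬝ᵥ (X *ᵥ s) = s ⬝ᵥ ((Xᵀ * X) *ᵥ s) := by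
  have h1 : s ⬝ᵥ ((Xᵀ * X) *ᵥ s) = s ⬝ᵥ (Xᵀ *ᵥ (X *ᵥ s)) := by
    rw [Matrix.mulVec_mulVec]
  have h2 : s ⬝ᵥ (Xᵀ *ᵥ (X *ᵥ s)) = (Xᵀᵀ *ᵥ s) ⬝ᵥ (X *ᵥ s) := dot_mulVec_symm _ _ _
  rw [h1, h2, Matrix.transpose_transpose]

lemma quad_ge_sval {n : ℕ} {H : Matrix (Fin n) (Fin n) ℝ} (hH : H.IsHermitian) {c : ℝ}
    (hc : ∀ i, c ≤ sval hH i) (z : Fin n → ℝ) :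
    c * (z ⬝ᵥ z) ≤ z ⬝ᵥ (H *ᵥ z) := by
  have hsp : Submodule.span ℝ (Set.range (svec hH)) = ⊤ := by
    apply Submodule.eq_top_of_finrank_eq
    rw [finrank_span_eq_card (li_of_dot_orthonormal (svec_dot hH))]
    simp [Module.finrank_fin_fun]
  have hz : z ∈ Submodule.span ℝ (Set.range (svec hH)) := hsp ▸ Submodule.mem_top
  obtain ⟨b, hb⟩ := (Submodule.mem_span_range_iff_exists_fun ℝ).mp hz
  have h1 : z ⬝ᵥ (H *ᵥ z) = ∑ i, b i * (sval hH i * b i) := by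
    rw [← hb]; exact quad_sum_svec hH Function.injective_id b
  have h2 : z ⬝ᵥ z = ∑ i, b i * b i := by
    rw [← hb]; exact self_dot_sum_svec hH Function.injective_id b
  rw [h1, h2, Finset.mul_sum]
  refine Finset.sum_le_sum fun i _ => ?_
  nlinarith [mul_self_nonneg (b i), hc i]

lemma eigDesc_eq_zero_of_rank_le {n : ℕ} {M : Matrix (Fin n) (Fin n) ℝ} (hM : M.PosSemidef)
    {r : ℕ} (hr : M.rank ≤ r) (j : Fin n) (hj : r ≤ (j : ℕ)) : eigDesc M j = 0 := by
  by_contra h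
  have hpos : 0 < eigDesc M j := lt_of_le_of_ne (eigDesc_nonneg hM j) (Ne.symm h)
  have hjrev : (j.rev : ℕ) = n - 1 - (j : ℕ) := Fin.val_rev j ▸ by omega
  have hjn : (j : ℕ) < n := j.isLt
  set k : Fin ((j : ℕ) + 1) → Fin n := fun i => ⟨(j.rev : ℕ) + (i : ℕ), by
    have := i.isLt; omega⟩ with hk
  have hknz : ∀ i, hM.1.eigenvalues (Tuple.sort hM.1.eigenvalues (k i)) ≠ 0 := by
    intro i
    have h1 : sval hM.1 j.rev ≤ sval hM.1 (k i) := by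
      apply sval_mono; simp [hk, Fin.le_def]
    have h2 : 0 < sval hM.1 j.rev := by rwa [eigDesc_eq hM.1] at hpos
    have : (0:ℝ) < sval hM.1 (k i) := lt_of_lt_of_le h2 h1
    exact ne_of_gt this
  have hcard : (j : ℕ) + 1 ≤ Fintype.card {i // hM.1.eigenvalues i ≠ 0} := by
    have := Fintype.card_le_of_injective
      (fun i : Fin ((j : ℕ) + 1) =>
        (⟨Tuple.sort hM.1.eigenvalues (k i), hknz i⟩ : {i // hM.1.eigenvalues i ≠ 0}))
      (by
        intro a b hab
        simp only [Subtype.mk_eq_mk, EmbeddingLike.apply_eq_iff_eq] at hab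
        have : (k a : ℕ) = (k b : ℕ) := congrArg Fin.val hab
        simp only [hk] at this
        exact Fin.ext (by omega))
    simpa using this
  have hrank := hM.1.rank_eq_card_non_zero_eigs
  omega

/-- Let `m ≤ N`, let `A` be an `m × m` real symmetric positive semidefinite matrix and `P` an
`N × m` real matrix.  Then for every `j ∈ {1, …, m}` (zero-based: `j : Fin m`) one has
`λ_j(P A Pᵀ) ≥ λ_min(Pᵀ P) · λ_j(A)`, and for every `j` with `m < j ≤ N` (zero-based:
`j : Fin N` with `m ≤ j`) one has `λ_j(P A Pᵀ) = 0`. -/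
theorem eigenvalues_conjugation_bounds {m N : ℕ} (hmN : m ≤ N)
    (A : Matrix (Fin m) (Fin m) ℝ) (hA : A.PosSemidef) (P : Matrix (Fin N) (Fin m) ℝ) :
    (∀ j : Fin m,
        eigDesc (P * A * Pᵀ) (Fin.castLE hmN j) ≥
          eigDesc (Pᵀ * P) ⟨m - 1, Nat.sub_lt j.pos Nat.one_pos⟩ * eigDesc A j) ∧
      ∀ j : Fin N, m ≤ (j : ℕ) → eigDesc (P * A * Pᵀ) j = 0 := by
  obtain ⟨R, hRps, hRR0⟩ : ∃ R : Matrix (Fin m) (Fin m) ℝ, R.PosSemidef ∧ R * R = A := by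
    open scoped MatrixOrder in
    exact ⟨CFC.sqrt A, Matrix.nonneg_iff_posSemidef.mp (CFC.sqrt_nonneg A),
      CFC.sqrt_mul_sqrt_self A (Matrix.nonneg_iff_posSemidef.mpr hA)⟩
  have hRT : Rᵀ = R := by
    rw [← Matrix.conjTranspose_eq_transpose_of_trivial]; exact hRps.1
  set X := P * R with hXdef
  have hXXT : X * Xᵀ = P * A * Pᵀ := by
    rw [hXdef, Matrix.transpose_mul, hRT, Matrix.mul_assoc, ← Matrix.mul_assoc R R,
      hRR0, ← Matrix.mul_assoc]
  have hMps : (P * A * Pᵀ).PosSemidef := by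
    rw [← hXXT]
    have := Matrix.posSemidef_self_mul_conjTranspose X
    rwa [Matrix.conjTranspose_eq_transpose_of_trivial] at this
  set B := Xᵀ * X with hBdef
  have hBps : B.PosSemidef := by
    have := Matrix.posSemidef_conjTranspose_mul_self X
    rwa [Matrix.conjTranspose_eq_transpose_of_trivial] at this
  have hPTPps : (Pᵀ * P).PosSemidef := by
    have := Matrix.posSemidef_conjTranspose_mul_self P
    rwa [Matrix.conjTranspose_eq_transpose_of_trivial] at this
  constructor
  · intro j
    have hm : 0 < m := j.pos
    set c := eigDesc (Pᵀ * P) ⟨m - 1, Nat.sub_lt j.pos Nat.one_pos⟩ with hcdef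
    have hc0 : 0 ≤ c := eigDesc_nonneg hPTPps _
    have hl0 : 0 ≤ eigDesc A j := eigDesc_nonneg hA j
    have hM0 : 0 ≤ eigDesc (P * A * Pᵀ) (Fin.castLE hmN j) := eigDesc_nonneg hMps _
    rcases le_or_gt (c * eigDesc A j) 0 with hle | hpos
    · exact le_trans hle hM0
    have hcmin : ∀ i, c ≤ sval hPTPps.1 i := by
      intro i
      rw [hcdef, eigDesc_eq hPTPps.1]
      apply sval_mono
      rw [Fin.le_def, Fin.val_rev]
      show m - (m - 1 + 1) ≤ (i : ℕ)
      omega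
    have hjm : (j : ℕ) < m := j.isLt
    have hjrev : (j.rev : ℕ) = m - 1 - (j : ℕ) := by rw [Fin.val_rev]; omega
    set topincl : Fin ((j : ℕ) + 1) → Fin m := fun i =>
      ⟨(j.rev : ℕ) + (i : ℕ), by have := i.isLt; omega⟩ with htopincl
    have htinj : Function.Injective topincl := by
      intro a b hab
      have : (topincl a : ℕ) = (topincl b : ℕ) := congrArg Fin.val hab
      simp only [htopincl] at this
      exact Fin.ext (by omega)
    have hrevle : ∀ i, j.rev ≤ topincl i := by
      intro i
      rw [Fin.le_def]
      exact Nat.le_add_right _ _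
    -- Step 1 : c * λ_j(A) ≤ λ_j(B) where B = Xᵀ X
    have hstep1 : c * eigDesc A j ≤ eigDesc B j := by
      apply key_lower hBps.1 j (le_refl ((j : ℕ) + 1))
        (fun i => svec hA.1 (topincl i))
        (li_of_dot_orthonormal (svec_comp_dot hA.1 htinj))
      intro x hx
      obtain ⟨b, hb⟩ := (Submodule.mem_span_range_iff_exists_fun ℝ).mp hx
      have e1 : x ⬝ᵥ (B *ᵥ x) = (X *ᵥ x) ⬝ᵥ (X *ᵥ x) := (dot_XtX X x).symm
      have e2 : X *ᵥ x = P *ᵥ (R *ᵥ x) := (Matrix.mulVec_mulVec x P R).symm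
      set u := R *ᵥ x with hudef
      have e3 : u ⬝ᵥ ((Pᵀ * P) *ᵥ u) = (P *ᵥ u) ⬝ᵥ (P *ᵥ u) := (dot_XtX P u).symm
      have e4 : u ⬝ᵥ u = x ⬝ᵥ (A *ᵥ x) := by
        have h' := dot_XtX R x
        rw [hRT] at h'
        have hRR : R * R = A := hRR0
        rw [hRR] at h'
        exact h'
      have e5 : x ⬝ᵥ (A *ᵥ x) = ∑ i, b i * (sval hA.1 (topincl i) * b i) := by
        rw [← hb]; exact quad_sum_svec hA.1 htinj b
      have e6 : x ⬝ᵥ x = ∑ i, b i * b i := by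
        rw [← hb]; exact self_dot_sum_svec hA.1 htinj b
      have e7 : eigDesc A j * (x ⬝ᵥ x) ≤ x ⬝ᵥ (A *ᵥ x) := by
        rw [e5, e6, Finset.mul_sum]
        refine Finset.sum_le_sum fun i _ => ?_
        have hle2 : eigDesc A j ≤ sval hA.1 (topincl i) := by
          rw [eigDesc_eq hA.1]; exact sval_mono hA.1 (hrevle i)
        nlinarith [mul_self_nonneg (b i)]
      have e8 : c * (u ⬝ᵥ u) ≤ u ⬝ᵥ ((Pᵀ * P) *ᵥ u) := quad_ge_sval hPTPps.1 hcmin u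
      calc c * eigDesc A j * (x ⬝ᵥ x) = c * (eigDesc A j * (x ⬝ᵥ x)) := by ring
        _ ≤ c * (x ⬝ᵥ (A *ᵥ x)) := mul_le_mul_of_nonneg_left e7 hc0
        _ = c * (u ⬝ᵥ u) := by rw [e4]
        _ ≤ u ⬝ᵥ ((Pᵀ * P) *ᵥ u) := e8
        _ = (X *ᵥ x) ⬝ᵥ (X *ᵥ x) := by rw [e3, e2]
        _ = x ⬝ᵥ (B *ᵥ x) := e1.symm
    have hμpos : 0 < eigDesc B j := lt_of_lt_of_le hpos hstep1
    have hν : ∀ i : Fin ((j : ℕ) + 1), eigDesc B j ≤ sval hBps.1 (topincl i) := by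
      intro i
      rw [eigDesc_eq hBps.1]; exact sval_mono hBps.1 (hrevle i)
    have hν0 : ∀ i : Fin ((j : ℕ) + 1), 0 < sval hBps.1 (topincl i) :=
      fun i => lt_of_lt_of_le hμpos (hν i)
    set w : Fin ((j : ℕ) + 1) → (Fin m → ℝ) := fun i => svec hBps.1 (topincl i) with hwdef
    have hsumX : ∀ g : Fin ((j : ℕ) + 1) → ℝ,
        X *ᵥ (∑ i, g i • w i) = ∑ i, g i • (X *ᵥ w i) := by
      intro g
      rw [← Matrix.mulVecLin_apply, map_sum]
      congr 1; funext i
      rw [LinearMap.map_smul, Matrix.mulVecLin_apply]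
    have hquadB : ∀ g : Fin ((j : ℕ) + 1) → ℝ,
        (∑ i, g i • w i) ⬝ᵥ (B *ᵥ (∑ i, g i • w i)) =
          ∑ i, g i * (sval hBps.1 (topincl i) * g i) := fun g => quad_sum_svec hBps.1 htinj g
    have hXXquad : ∀ g : Fin ((j : ℕ) + 1) → ℝ,
        (X *ᵥ (∑ i, g i • w i)) ⬝ᵥ (X *ᵥ (∑ i, g i • w i)) =
          (∑ i, g i • w i) ⬝ᵥ (B *ᵥ (∑ i, g i • w i)) := by
      intro g
      exact dot_XtX X _
    -- Step 2 : λ_j(B) ≤ λ_j(X Xᵀ)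
    have hstep2 : eigDesc B j ≤ eigDesc (X * Xᵀ) (Fin.castLE hmN j) := by
      have hXXps : (X * Xᵀ).PosSemidef := by rw [hXXT]; exact hMps
      apply key_lower hXXps.1 (Fin.castLE hmN j)
        (κ := (j : ℕ) + 1) (by simp) (fun i => X *ᵥ w i)
      · -- linear independence
        rw [Fintype.linearIndependent_iff]
        intro g hg i
        rw [← hsumX g] at hg
        have h0 : (∑ i, g i • w i) ⬝ᵥ (B *ᵥ (∑ i, g i • w i)) = 0 := by
          rw [← hXXquad g, hg]
          simp
        rw [hquadB g] at h0
        have hterm : ∀ i ∈ Finset.univ, (0:ℝ) ≤ g i * (sval hBps.1 (topincl i) * g i) := by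
          intro i _
          nlinarith [mul_self_nonneg (g i), (hν0 i).le]
        have := (Finset.sum_eq_zero_iff_of_nonneg hterm).mp h0 i (Finset.mem_univ i)
        have h2 : sval hBps.1 (topincl i) * (g i * g i) = 0 := by linarith [this]
        rcases mul_eq_zero.mp h2 with h3 | h3
        · exact absurd h3 (ne_of_gt (hν0 i))
        · exact mul_self_eq_zero.mp h3
      · -- quadratic bound on the span
        intro y hy
        obtain ⟨g, hg⟩ := (Submodule.mem_span_range_iff_exists_fun ℝ).mp hy
        rw [← hg, ← hsumX g]
        set x := ∑ i, g i • w i with hxdef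
        have f1 : (X *ᵥ x) ⬝ᵥ ((X * Xᵀ) *ᵥ (X *ᵥ x)) =
            (Xᵀ *ᵥ (X *ᵥ x)) ⬝ᵥ (Xᵀ *ᵥ (X *ᵥ x)) := by
          have h' := dot_XtX Xᵀ (X *ᵥ x)
          rw [Matrix.transpose_transpose] at h'
          exact h'.symm
        have f2 : Xᵀ *ᵥ (X *ᵥ x) = B *ᵥ x := Matrix.mulVec_mulVec x Xᵀ X
        have f3 : B *ᵥ x = ∑ i, (sval hBps.1 (topincl i) * g i) • w i := by
          rw [hxdef]; exact mulVec_sum_svec hBps.1 topincl g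
        have f4 : (B *ᵥ x) ⬝ᵥ (B *ᵥ x) =
            ∑ i, (sval hBps.1 (topincl i) * g i) * (sval hBps.1 (topincl i) * g i) := by
          rw [f3]; exact dot_sum_sum (svec_comp_dot hBps.1 htinj) _ _
        have f5 : (X *ᵥ x) ⬝ᵥ (X *ᵥ x) = ∑ i, g i * (sval hBps.1 (topincl i) * g i) := by
          rw [hXXquad g, hquadB g]
        rw [f1, f2, f4, f5, Finset.mul_sum]
        refine Finset.sum_le_sum fun i _ => ?_
        nlinarith [mul_self_nonneg (g i), hν i, hμpos.le, (hν0 i).le]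
    rw [← hXXT]
    exact le_trans hstep1 hstep2
  · intro j hj
    apply eigDesc_eq_zero_of_rank_le hMps (r := m) _ j hj
    calc (P * A * Pᵀ).rank ≤ (P * A).rank := Matrix.rank_mul_le_left (P * A) Pᵀ
      _ ≤ P.rank := Matrix.rank_mul_le_left P A
      _ ≤ m := by simpa using P.rank_le_card_width
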